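/- Let $F$ be a field equipped with a nonarchimedean absolute value $|\cdot|$, let $\pi, \zeta, \beta \in F$ and $\rho \in \mathbb{R}$ satisfy $|\zeta| = 1$, $0 < |\pi| < 1$, $\beta \neq 0$, $\rho > 1$, and $|\beta|\rho < 1$. Set $P = \begin{pmatrix} -\pi\zeta & \zeta \\ -1 & 1 \end{pmatrix}$ and $A_0 = P \begin{pmatrix} \beta & 0 \\ 0 & 1\end{pmatrix} P^{-1} \in GL_2(F)$. Then for every $z \in F$ with $|z - \pi\zeta| > |\beta|\rho$, the Möbius image $A_0 \cdot z$ is defined (its denominator is nonzero) and satisfies $|A_0 \cdot z - \zeta| < \rho^{-1}$. That is, $A_0$ maps the complement of the closed disc of radius $|\beta|\rho$ around $\pi\zeta$ into the open disc of radius $\rho^{-1}$ around $\zeta$. -/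

import Mathlib

private lemma na_add_eq_left {F : Type*} [Field F] (v : AbsoluteValue F ℝ)
    (hna : IsNonarchimedean v) {a b : F} (h : v b < v a) : v (a + b) = v a := by
  refine le_antisymm (le_trans (hna a b) (max_le le_rfl h.le)) ?_
  by_contra hlt
  push_neg at hlt
  have : v a = v (a + b + (-b)) := by ring_nf
  have h2 : v a ≤ max (v (a + b)) (v (-b)) := this.le.trans (hna _ _)
  rw [v.map_neg] at h2
  rcases max_cases (v (a + b)) (v b) with ⟨he, _⟩ | ⟨he, _⟩ <;> rw [he] at h2
  · exact absurd h2 (not_le.mpr hlt)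
  · exact absurd h2 (not_le.mpr h)

/-- Let `|ζ| = 1`, `0 < |π| < 1`, `β ≠ 0`, `ρ > 1`, `|β| ρ < 1`, and
`A₀ = P diag(β, 1) P⁻¹` with `P = !![-πζ, ζ; -1, 1]`. Then `A₀` maps the complement of
the closed disc of radius `|β| ρ` around `πζ` into the open disc of radius `ρ⁻¹`
around `ζ` (and the Möbius image is defined). -/
theorem schottky_generator_maps_disc_complement {F : Type*} [Field F]
    (v : AbsoluteValue F ℝ) (hna : IsNonarchimedean v)
    (π ζ β : F) (ρ : ℝ)
    (hζ : v ζ = 1) (hπ0 : 0 < v π) (hπ1 : v π < 1) (hβ : β ≠ 0)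
    (hρ : 1 < ρ) (hβρ : v β * ρ < 1)
    (A : Matrix (Fin 2) (Fin 2) F)
    (hA : A = !![-(π * ζ), ζ; -1, 1] * !![β, 0; 0, 1] * !![-(π * ζ), ζ; -1, 1]⁻¹) :
    ∀ z : F, v β * ρ < v (z - π * ζ) →
      A 1 0 * z + A 1 1 ≠ 0 ∧
      v ((A 0 0 * z + A 0 1) / (A 1 0 * z + A 1 1) - ζ) < ρ⁻¹ := by
  -- basic nonvanishing facts
  have hζ0 : ζ ≠ 0 := fun h => by simp [h] at hζ
  have hπne1 : (1 : F) - π ≠ 0 := by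
    intro h
    have : π = 1 := by linear_combination -h
    rw [this, v.map_one] at hπ1; linarith
  set d : F := ζ * (1 - π) with hd
  have hd0 : d ≠ 0 := mul_ne_zero hζ0 hπne1
  -- v (1 - π) = 1
  have hv1π : v (1 - π) = 1 := by
    have : v (1 + -π) = v 1 := na_add_eq_left v hna (by rw [v.map_neg, v.map_one]; exact hπ1)
    simpa [sub_eq_add_neg] using this
  -- explicit inverse of P
  have hPinv : (!![-(π * ζ), ζ; -1, 1] : Matrix (Fin 2) (Fin 2) F)⁻¹ =
      !![d⁻¹, -(ζ * d⁻¹); d⁻¹, -(π * ζ * d⁻¹)] := by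
    apply Matrix.inv_eq_right_inv
    rw [Matrix.mul_fin_two, Matrix.one_fin_two]
    ext i j
    fin_cases i <;> fin_cases j <;> simp <;> field_simp [hd] <;> ring
  -- explicit form of A
  have hAe : A = !![(-(π * ζ * β) + ζ) * d⁻¹, -(π * ζ * β) * -(ζ * d⁻¹) + ζ * -(π * ζ * d⁻¹);
      (-β + 1) * d⁻¹, -β * -(ζ * d⁻¹) + 1 * -(π * ζ * d⁻¹)] := by
    rw [hA, hPinv, Matrix.mul_fin_two, Matrix.mul_fin_two]
    congr 1 <;> ring
  have hA00 : A 0 0 = (-(π * ζ * β) + ζ) * d⁻¹ := by rw [hAe]; simp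
  have hA01 : A 0 1 = -(π * ζ * β) * -(ζ * d⁻¹) + ζ * -(π * ζ * d⁻¹) := by rw [hAe]; simp
  have hA10 : A 1 0 = (-β + 1) * d⁻¹ := by rw [hAe]; simp
  have hA11 : A 1 1 = -β * -(ζ * d⁻¹) + 1 * -(π * ζ * d⁻¹) := by rw [hAe]; simp
  intro z hz
  set u : F := z - π * ζ with hu
  set w : F := β * (z - ζ) with hw
  have hvβ0 : 0 < v β := v.pos hβ
  have hvu0 : 0 < v u := lt_trans (by positivity) hz
  have hu0 : u ≠ 0 := fun h => by rw [h, v.map_zero] at hvu0; exact lt_irrefl _ hvu0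
  -- estimate v w < ρ⁻¹ * v u
  have hρ0 : (0:ℝ) < ρ := lt_trans one_pos hρ
  have hvζπζ : v (ζ - π * ζ) = 1 := by
    have : ζ - π * ζ = ζ * (1 - π) := by ring
    rw [this, v.map_mul, hζ, hv1π, one_mul]
  have hvzζ : v (z - ζ) ≤ max (v u) 1 := by
    have h1 : z - ζ = u + -(ζ - π * ζ) := by rw [hu]; ring
    calc v (z - ζ) = v (u + -(ζ - π * ζ)) := by rw [h1]
      _ ≤ max (v u) (v (-(ζ - π * ζ))) := hna _ _
      _ = max (v u) 1 := by rw [v.map_neg, hvζπζ]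
  have hvw : v w < ρ⁻¹ * v u := by
    rw [hw, v.map_mul]
    have hβinv : v β < ρ⁻¹ := by
      rw [← one_div]; exact (lt_div_iff₀ hρ0).mpr hβρ
    rcases max_cases (v u) 1 with ⟨he, h1⟩ | ⟨he, h1⟩ <;> rw [he] at hvzζ
    · calc v β * v (z - ζ) ≤ v β * v u := mul_le_mul_of_nonneg_left hvzζ hvβ0.le
        _ < ρ⁻¹ * v u := mul_lt_mul_of_pos_right hβinv hvu0
    · calc v β * v (z - ζ) ≤ v β * 1 := mul_le_mul_of_nonneg_left hvzζ hvβ0.le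
        _ = v β := mul_one _
        _ < ρ⁻¹ * v u := by
          have h2 : v β * ρ * ρ⁻¹ < v u * ρ⁻¹ := mul_lt_mul_of_pos_right hz (by positivity)
          rw [mul_assoc, mul_inv_cancel₀ (ne_of_gt hρ0), mul_one] at h2
          linarith [h2, mul_comm ρ⁻¹ (v u)]
  have hvwu : v w < v u := lt_of_lt_of_le hvw (by
    have : ρ⁻¹ * v u ≤ 1 * v u := by
      apply mul_le_mul_of_nonneg_right _ hvu0.le
      rw [inv_le_one_iff₀]; right; exact hρ.le
    linarith)
  -- v (u - w) = v u
  have hvuw : v (u - w) = v u := by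
    have := na_add_eq_left v hna (a := u) (b := -w) (by rw [v.map_neg]; exact hvwu)
    simpa [sub_eq_add_neg] using this
  have huw0 : u - w ≠ 0 := fun h => by rw [h, v.map_zero] at hvuw; exact absurd hvuw.symm (ne_of_gt hvu0)
  -- denominator
  have hden : A 1 0 * z + A 1 1 = d⁻¹ * (u - w) := by
    rw [hA10, hA11, hu, hw]; ring
  have hdinv0 : (d⁻¹ : F) ≠ 0 := inv_ne_zero hd0
  constructor
  · rw [hden]; exact mul_ne_zero hdinv0 huw0
  · have hratio : (A 0 0 * z + A 0 1) / (A 1 0 * z + A 1 1) - ζ = ζ * (1 - π) * w / (u - w) := by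
      rw [hA00, hA01, hden, hu, hw, hd]
      have h' : z - π * ζ - β * (z - ζ) ≠ 0 := huw0
      field_simp
      ring
    rw [hratio, map_div₀, v.map_mul, v.map_mul, hζ, hv1π, hvuw, one_mul, one_mul,
      div_lt_iff₀ hvu0]
    exact hvw
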